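/- Let H_A and H_B be finite-dimensional complex Hilbert spaces and let ρ_AB be a positive semidefinite operator on H_A ⊗ H_B. Then the minimum of tr(σ_B) over positive semidefinite σ_B on H_B with id_A ⊗ σ_B ≥ ρ_AB equals the maximum of tr(ρ_AB · E_AB) over all positive semidefinite operators E_AB on H_A ⊗ H_B with tr_A(E_AB) ≤ id_B (i.e., relaxing the equality constraint tr_A(E_AB) = id_B to an operator inequality does not change the optimal value). -/

import Mathlib

open Matrix
open scoped Kronecker ComplexConjugate ComplexOrder

noncomputable section

/-- Partial trace over the first (A) subsystem. -/
def ptraceA {A B : Type*} [Fintype A] (M : Matrix (A × B) (A × B) ℂ) :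
    Matrix B B ℂ :=
  Matrix.of fun i j => ∑ a : A, M (a, i) (a, j)

/-- Partial trace over the second (B) subsystem. -/
def ptraceB {A B : Type*} [Fintype B] (M : Matrix (A × B) (A × B) ℂ) :
    Matrix A A ℂ :=
  Matrix.of fun i j => ∑ b : B, M (i, b) (j, b)

/-- A density operator: positive semidefinite with unit trace. -/
def IsDensity {n : Type*} [Fintype n] (ρ : Matrix n n ℂ) : Prop :=
  ρ.PosSemidef ∧ ρ.trace = 1

/-- Conditional min-entropy `H_min(A|B)_ρ = - inf_σ D_∞(ρ ‖ id_A ⊗ σ)`, where the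
infimum ranges over density operators `σ` on `B` and
`D_∞(τ‖τ') = inf {λ | τ ≤ 2^λ τ'}`. -/
def Hmin {A B : Type*} [Fintype A] [Fintype B] [DecidableEq A] [DecidableEq B]
    (ρ : Matrix (A × B) (A × B) ℂ) : ℝ :=
  - sInf {l : ℝ | ∃ σ : Matrix B B ℂ, IsDensity σ ∧
      (((2 : ℝ) ^ l : ℝ) • ((1 : Matrix A A ℂ) ⊗ₖ σ) - ρ).PosSemidef}

/-- The square root of a positive semidefinite matrix, as `Matrix.PosSemidef.sqrt` was defined
in the older Mathlib (removed since). -/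
def Matrix.PosSemidef.sqrt {n : Type*} [Fintype n] [DecidableEq n] {M : Matrix n n ℂ}
    (hA : M.PosSemidef) : Matrix n n ℂ :=
  hA.1.eigenvectorUnitary.1 * diagonal ((↑) ∘ (√·) ∘ hA.1.eigenvalues) *
    (star hA.1.eigenvectorUnitary : Matrix n n ℂ)

open scoped Classical in
/-- Positive semidefinite square root (junk value `0` off the PSD cone). -/
def psqrt {n : Type*} [Fintype n] [DecidableEq n] (M : Matrix n n ℂ) : Matrix n n ℂ :=
  if h : M.PosSemidef then h.sqrt else 0

/-- Trace norm `‖M‖₁ = tr √(Mᴴ M)`. -/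
def traceNorm {n : Type*} [Fintype n] [DecidableEq n] (M : Matrix n n ℂ) : ℝ :=
  (psqrt (Mᴴ * M)).trace.re

/-- Fidelity `F(ρ,σ) = ‖√ρ √σ‖₁`. -/
def fidelity {n : Type*} [Fintype n] [DecidableEq n] (ρ σ : Matrix n n ℂ) : ℝ :=
  traceNorm (psqrt ρ * psqrt σ)

/-- Choi matrix of a linear map on matrices. -/
def choi {B A' : Type*} [Fintype B] [DecidableEq B] [Fintype A']
    (F : Matrix B B ℂ →ₗ[ℂ] Matrix A' A' ℂ) : Matrix (B × A') (B × A') ℂ :=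
  Matrix.of fun p q => (F (Matrix.single p.1 q.1 1)) p.2 q.2

/-- A quantum operation (CPTP map): completely positive (PSD Choi matrix, by Choi's
theorem) and trace-preserving. -/
def IsCPTP {B A' : Type*} [Fintype B] [DecidableEq B] [Fintype A']
    (F : Matrix B B ℂ →ₗ[ℂ] Matrix A' A' ℂ) : Prop :=
  (choi F).PosSemidef ∧ ∀ M : Matrix B B ℂ, (F M).trace = M.trace

/-- The map `id_A ⊗ F` applied to a bipartite operator. -/
def idTensor {A B A' : Type*} [Fintype B]
    (F : Matrix B B ℂ →ₗ[ℂ] Matrix A' A' ℂ) (ρ : Matrix (A × B) (A × B) ℂ) :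
    Matrix (A × A') (A × A') ℂ :=
  Matrix.of fun p q => (F (Matrix.of fun b b' => ρ (p.1, b) (q.1, b'))) p.2 q.2

/-- The quadratic form `⟨ψ|M|ψ⟩` (real part). -/
def pureOverlap {n : Type*} [Fintype n] (ψ : n → ℂ) (M : Matrix n n ℂ) : ℝ :=
  (∑ p, ∑ q, conj (ψ p) * M p q * ψ q).re

/-- The maximally entangled state `|Φ⟩ = d^{-1/2} ∑ₓ |x⟩|x⟩`. -/
def maxEnt (A : Type*) [Fintype A] [DecidableEq A] : A × A → ℂ :=
  fun p => if p.1 = p.2 then ((Real.sqrt (Fintype.card A))⁻¹ : ℝ) else 0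

/-- `q_corr(A|B)_ρ`: `d_A` times the maximal squared fidelity with the maximally
entangled state achievable by quantum operations on `B`. -/
def qcorr {A B : Type*} [Fintype A] [Fintype B] [DecidableEq A] [DecidableEq B]
    (ρ : Matrix (A × B) (A × B) ℂ) : ℝ :=
  (Fintype.card A : ℝ) *
    sSup {x : ℝ | ∃ F : Matrix B B ℂ →ₗ[ℂ] Matrix A A ℂ, IsCPTP F ∧
      x = pureOverlap (maxEnt A) (idTensor F ρ)}

/-- The completely mixed state. -/
def mixed (A : Type*) [Fintype A] [DecidableEq A] : Matrix A A ℂ :=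
  ((Fintype.card A : ℂ)⁻¹) • (1 : Matrix A A ℂ)

/-- `q_decpl(A|B)_ρ`: `d_A` times the maximal squared fidelity with `τ_A ⊗ σ_B`. -/
def qdecpl {A B : Type*} [Fintype A] [Fintype B] [DecidableEq A] [DecidableEq B]
    (ρ : Matrix (A × B) (A × B) ℂ) : ℝ :=
  (Fintype.card A : ℝ) *
    sSup {x : ℝ | ∃ σ : Matrix B B ℂ, IsDensity σ ∧
      x = (fidelity ρ ((mixed A) ⊗ₖ σ)) ^ 2}

/-- Reduced state `tr_C |ψ⟩⟨ψ|` of a pure state `ψ` on `(A ⊗ B) ⊗ C`. -/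
def redL {S C : Type*} [Fintype C] (ψ : S × C → ℂ) : Matrix S S ℂ :=
  Matrix.of fun s s' => ∑ c, ψ (s, c) * conj (ψ (s', c))

/-- Reduced state `tr_B |ψ⟩⟨ψ|` on `A ⊗ C` of a pure state `ψ` on `(A ⊗ B) ⊗ C`. -/
def redAC {A B C : Type*} [Fintype B] (ψ : (A × B) × C → ℂ) :
    Matrix (A × C) (A × C) ℂ :=
  Matrix.of fun p q => ∑ b, ψ ((p.1, b), p.2) * conj (ψ ((q.1, b), q.2))


namespace SDPAux

variable {n : Type*} [Fintype n]

/-- quadratic form expansion -/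
lemma qf_expand (M : Matrix n n ℂ) (x : n → ℂ) :
    star x ⬝ᵥ M *ᵥ x = ∑ i, ∑ j, conj (x i) * M i j * x j := by
  simp [dotProduct, mulVec, Finset.mul_sum, mul_assoc]

lemma qf_conjTranspose (M : Matrix n n ℂ) (x : n → ℂ) :
    star x ⬝ᵥ Mᴴ *ᵥ x = conj (star x ⬝ᵥ M *ᵥ x) := by
  rw [qf_expand, qf_expand, map_sum]
  rw [Finset.sum_comm]
  refine Finset.sum_congr rfl fun i _ => ?_
  rw [map_sum]
  refine Finset.sum_congr rfl fun j _ => ?_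
  simp [Matrix.conjTranspose_apply]
  ring

lemma qf_im_zero {M : Matrix n n ℂ} (hM : M.IsHermitian) (x : n → ℂ) :
    (star x ⬝ᵥ M *ᵥ x).im = 0 := by
  have h := qf_conjTranspose M x
  rw [hM.eq] at h
  have := congrArg Complex.im h
  simp at this
  linarith

lemma psd_of_herm {M : Matrix n n ℂ} (hM : M.IsHermitian)
    (h : ∀ x, 0 ≤ (star x ⬝ᵥ M *ᵥ x).re) : M.PosSemidef := by
  refine Matrix.PosSemidef.of_dotProduct_mulVec_nonneg hM fun x => ?_
  rw [Complex.le_def]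
  exact ⟨by simpa using h x, by simpa using (qf_im_zero hM x).symm⟩

lemma pd_of_herm {M : Matrix n n ℂ} (hM : M.IsHermitian)
    (h : ∀ x, x ≠ 0 → 0 < (star x ⬝ᵥ M *ᵥ x).re) : M.PosDef := by
  refine Matrix.PosDef.of_dotProduct_mulVec_pos hM fun x hx => ?_
  rw [Complex.lt_def]
  exact ⟨by simpa using h x hx, by simpa using (qf_im_zero hM x).symm⟩

lemma re_qf_nonneg {M : Matrix n n ℂ} (hM : M.PosSemidef) (x : n → ℂ) :
    0 ≤ (star x ⬝ᵥ M *ᵥ x).re := by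
  have := hM.dotProduct_mulVec_nonneg x
  rw [Complex.le_def] at this
  simpa using this.1

lemma diag_re_nonneg [DecidableEq n] {M : Matrix n n ℂ} (hM : M.PosSemidef) (i : n) :
    0 ≤ (M i i).re := by
  have := re_qf_nonneg hM (Pi.single i 1)
  rw [qf_expand] at this
  simpa [Pi.single_apply, ite_mul, mul_ite, Finset.sum_ite_eq, Finset.sum_ite_eq'] using this

lemma trace_re_nonneg [DecidableEq n] {M : Matrix n n ℂ} (hM : M.PosSemidef) :
    0 ≤ M.trace.re := by
  have : M.trace = ∑ i, M i i := rfl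
  rw [this, Complex.re_sum]
  exact Finset.sum_nonneg fun i _ => diag_re_nonneg hM i



variable {n : Type*} [Fintype n] [DecidableEq n]

lemma trace_mul_psd_re_nonneg {P Q : Matrix n n ℂ}
    (hP : P.PosSemidef) (hQ : Q.PosSemidef) : 0 ≤ ((P * Q).trace).re := by
  obtain ⟨S, hS1, hS2⟩ : ∃ S : Matrix n n ℂ, S.IsHermitian ∧ S * S = P :=
    open scoped MatrixOrder in
    ⟨CFC.sqrt P, (CFC.sqrt_nonneg P).posSemidef.1, CFC.sqrt_mul_sqrt_self P hP.nonneg⟩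
  have h1 : (P * Q).trace = (S * Q * S).trace := by
    rw [← hS2, Matrix.mul_assoc, Matrix.trace_mul_comm]
  have h2 : (S * Q * Sᴴ).PosSemidef := hQ.mul_mul_conjTranspose_same _
  rw [hS1.eq] at h2
  rw [h1]
  exact trace_re_nonneg h2



omit [DecidableEq n] in
lemma outer_posSemidef (x : n → ℂ) : (vecMulVec x (star x)).PosSemidef := by
  have herm : (vecMulVec x (star x)).IsHermitian := by
    ext i j
    simp [Matrix.conjTranspose_apply, vecMulVec_apply, mul_comm]
  refine psd_of_herm herm fun y => ?_
  rw [qf_expand]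
  have : ∑ i, ∑ j, conj (y i) * vecMulVec x (star x) i j * y j
      = (∑ i, conj (y i) * x i) * ∑ j, conj (x j) * y j := by
    rw [Finset.sum_mul]
    refine Finset.sum_congr rfl fun i _ => ?_
    rw [Finset.mul_sum]
    refine Finset.sum_congr rfl fun j _ => ?_
    simp [vecMulVec_apply]
    ring
  rw [this]
  have h2 : ∑ j, conj (x j) * y j = conj (∑ i, conj (y i) * x i) := by
    rw [map_sum]; refine Finset.sum_congr rfl fun j _ => by simp [mul_comm]
  rw [h2, Complex.mul_conj]
  simp [Complex.normSq_nonneg]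

omit [DecidableEq n] in
lemma trace_mul_outer (M : Matrix n n ℂ) (x : n → ℂ) :
    (M * vecMulVec x (star x)).trace = star x ⬝ᵥ M *ᵥ x := by
  rw [qf_expand]
  have : (M * vecMulVec x (star x)).trace = ∑ i, ∑ j, M i j * (x j * conj (x i)) := by
    simp [Matrix.trace, Matrix.mul_apply, Matrix.diag, vecMulVec_apply]
  rw [this]
  refine Finset.sum_congr rfl fun i _ => Finset.sum_congr rfl fun j _ => ?_
  ring

omit [DecidableEq n] in
lemma qf_add (M N : Matrix n n ℂ) (x : n → ℂ) :
    star x ⬝ᵥ (M + N) *ᵥ x = star x ⬝ᵥ M *ᵥ x + star x ⬝ᵥ N *ᵥ x := by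
  rw [Matrix.add_mulVec, dotProduct_add]

omit [DecidableEq n] in
lemma qf_sub (M N : Matrix n n ℂ) (x : n → ℂ) :
    star x ⬝ᵥ (M - N) *ᵥ x = star x ⬝ᵥ M *ᵥ x - star x ⬝ᵥ N *ᵥ x := by
  rw [Matrix.sub_mulVec, dotProduct_sub]

omit [DecidableEq n] in
lemma qf_real_smul (c : ℝ) (M : Matrix n n ℂ) (x : n → ℂ) :
    star x ⬝ᵥ (c • M) *ᵥ x = (c : ℂ) * (star x ⬝ᵥ M *ᵥ x) := by
  rw [qf_expand, qf_expand, Finset.mul_sum]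
  refine Finset.sum_congr rfl fun i _ => ?_
  rw [Finset.mul_sum]
  refine Finset.sum_congr rfl fun j _ => ?_
  simp [Matrix.smul_apply, Complex.real_smul]
  ring

lemma qf_one (x : n → ℂ) :
    star x ⬝ᵥ (1 : Matrix n n ℂ) *ᵥ x = (∑ i, Complex.normSq (x i) : ℝ) := by
  rw [qf_expand]
  push_cast
  refine Finset.sum_congr rfl fun i _ => ?_
  rw [Finset.sum_eq_single i]
  · simp [Matrix.one_apply, Complex.normSq_eq_conj_mul_self]
  · intro j _ hj
    simp [Matrix.one_apply, Ne.symm hj]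
  · simp

omit [DecidableEq n] in
lemma qf_vec_smul (c : ℝ) (M : Matrix n n ℂ) (x : n → ℂ) :
    star (c • x) ⬝ᵥ M *ᵥ (c • x) = ((c^2 : ℝ) : ℂ) * (star x ⬝ᵥ M *ᵥ x) := by
  rw [qf_expand, qf_expand, Finset.mul_sum]
  refine Finset.sum_congr rfl fun i _ => ?_
  rw [Finset.mul_sum]
  refine Finset.sum_congr rfl fun j _ => ?_
  simp only [Pi.smul_apply, Complex.real_smul, _root_.map_mul, Complex.conj_ofReal]
  push_cast
  ring

omit [DecidableEq n] in
lemma sum_normSq_pos {x : n → ℂ} (hx : x ≠ 0) : 0 < ∑ i, Complex.normSq (x i) := by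
  refine lt_of_le_of_ne (Finset.sum_nonneg fun i _ => Complex.normSq_nonneg _) fun h => hx ?_
  have h0 := (Finset.sum_eq_zero_iff_of_nonneg (fun i _ => Complex.normSq_nonneg (x i))).mp h.symm
  funext i
  exact Complex.normSq_eq_zero.mp (h0 i (Finset.mem_univ i))

omit [DecidableEq n] in
lemma abs_qf_le (M : Matrix n n ℂ) (x : n → ℂ) :
    |(star x ⬝ᵥ M *ᵥ x).re| ≤ (∑ i, ∑ j, ‖M i j‖) * ∑ i, Complex.normSq (x i) := by
  set X := ∑ i, Complex.normSq (x i) with hX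
  have hXn : ∀ i, ‖x i‖^2 ≤ X := by
    intro i
    have : Complex.normSq (x i) = ‖x i‖^2 := by
      rw [Complex.normSq_eq_norm_sq]
    rw [← this]
    exact Finset.single_le_sum (f := fun i => Complex.normSq (x i))
      (fun i _ => Complex.normSq_nonneg _) (Finset.mem_univ i)
  have hXnn : 0 ≤ X := Finset.sum_nonneg fun i _ => Complex.normSq_nonneg _
  rw [qf_expand]
  calc |(∑ i, ∑ j, conj (x i) * M i j * x j).re|
      ≤ ‖∑ i, ∑ j, conj (x i) * M i j * x j‖ := Complex.abs_re_le_norm _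
    _ ≤ ∑ i, ‖∑ j, conj (x i) * M i j * x j‖ := norm_sum_le _ _
    _ ≤ ∑ i, ∑ j, ‖conj (x i) * M i j * x j‖ :=
        Finset.sum_le_sum fun i _ => norm_sum_le _ _
    _ ≤ ∑ i, ∑ j, ‖M i j‖ * X := by
        refine Finset.sum_le_sum fun i _ => Finset.sum_le_sum fun j _ => ?_
        rw [norm_mul, norm_mul, RCLike.norm_conj]
        have h1 := hXn i
        have h2 := hXn j
        have hab : ‖x i‖ * ‖x j‖ ≤ X := by nlinarith [sq_nonneg (‖x i‖ - ‖x j‖)]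
        calc ‖x i‖ * ‖M i j‖ * ‖x j‖ = ‖M i j‖ * (‖x i‖ * ‖x j‖) := by ring
          _ ≤ ‖M i j‖ * X := mul_le_mul_of_nonneg_left hab (norm_nonneg _)
    _ = (∑ i, ∑ j, ‖M i j‖) * X := by rw [Finset.sum_mul]; exact Finset.sum_congr rfl fun i _ => by rw [Finset.sum_mul]

omit [DecidableEq n] in
lemma exists_slater [DecidableEq n] {ρ : Matrix n n ℂ} (hρ : ρ.PosSemidef) :
    ∃ c : ℝ, 0 ≤ c ∧ ((c • (1 : Matrix n n ℂ)) - ρ).PosDef := by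
  set L := ∑ i, ∑ j, ‖ρ i j‖ with hL
  have hLnn : 0 ≤ L := Finset.sum_nonneg fun i _ => Finset.sum_nonneg fun j _ => norm_nonneg _
  refine ⟨L + 1, by linarith, ?_⟩
  have herm : ((L + 1 : ℝ) • (1 : Matrix n n ℂ) - ρ).IsHermitian := by
    refine Matrix.IsHermitian.sub ?_ hρ.1
    rw [Matrix.IsHermitian, Matrix.conjTranspose_smul, Matrix.conjTranspose_one]
    simp
  refine pd_of_herm herm fun x hx => ?_
  rw [qf_sub, qf_real_smul, qf_one]
  have h1 := (abs_le.mp (abs_qf_le ρ x)).2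
  have h2 := sum_normSq_pos hx
  have : (((L + 1 : ℝ) : ℂ) * ((∑ i, Complex.normSq (x i) : ℝ) : ℂ)).re
      = (L + 1) * ∑ i, Complex.normSq (x i) := by
    rw [← Complex.ofReal_mul]; simp
  rw [Complex.sub_re, this]
  nlinarith

lemma dot_single_single (M : Matrix n n ℂ) (i j : n) (a b : ℂ) :
    star (Pi.single i a) ⬝ᵥ M *ᵥ (Pi.single j b) = conj a * M i j * b := by
  have h1 : star (Pi.single i a) = (Pi.single i (conj a) : n → ℂ) := by
    ext k
    by_cases h : k = i
    · subst h; simp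
    · simp [Pi.single_apply, h]
  rw [h1, Matrix.mulVec_single, single_dotProduct]
  simp [mul_assoc]


lemma entry_norm_le_trace {M : Matrix n n ℂ} (hM : M.PosSemidef) (i j : n) :
    ‖M i j‖ ≤ M.trace.re := by
  have diag_im : ∀ k, (M k k).im = 0 := by
    intro k
    have := congrFun (congrFun hM.1.eq k) k
    rw [Matrix.conjTranspose_apply] at this
    have := congrArg Complex.im this
    simp at this
    linarith
  have diag_nonneg := fun k => diag_re_nonneg hM k
  have tr_eq : M.trace.re = ∑ k, (M k k).re := by
    simp [Matrix.trace, Matrix.diag]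
  by_cases hij : i = j
  · subst hij
    have : ‖M i i‖ = (M i i).re := by
      have h1 : M i i = ((M i i).re : ℂ) := Complex.ext rfl (by simp [diag_im i])
      rw [h1]
      simp [abs_of_nonneg (diag_nonneg i)]
    rw [this, tr_eq]
    exact Finset.single_le_sum (f := fun k => (M k k).re) (fun k _ => diag_nonneg k) (Finset.mem_univ i)
  · set z := M i j with hz
    by_cases hz0 : z = 0
    · rw [hz0]
      simp [tr_eq]
      exact Finset.sum_nonneg fun k _ => diag_nonneg k
    · have hzn : (0:ℝ) < ‖z‖ := norm_pos_iff.mpr hz0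
      have hznC : (‖z‖ : ℂ) ≠ 0 := by exact_mod_cast hzn.ne'
      set w : ℂ := -(conj z / (‖z‖ : ℂ)) with hw
      have hji : M j i = conj z := by
        have h0 := congrFun (congrFun hM.1.eq j) i
        rw [Matrix.conjTranspose_apply] at h0
        rw [← h0, ← hz]
        rfl
      have hzw : z * w = -((‖z‖:ℝ) : ℂ) := by
        have h1 : z * w = -(z * conj z) / (‖z‖:ℂ) := by rw [hw]; ring
        rw [h1, Complex.mul_conj, Complex.normSq_eq_norm_sq]
        push_cast
        rw [pow_two, neg_div, mul_div_assoc, div_self hznC, mul_one]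
      have hwz : conj w * conj z = -((‖z‖:ℝ) : ℂ) := by
        have h1 : conj w * conj z = conj (z * w) := by rw [RingHom.map_mul]; ring
        rw [h1, hzw]
        simp
      have hww : conj w * w = 1 := by
        rw [mul_comm, Complex.mul_conj]
        have : Complex.normSq w = 1 := by
          rw [hw]
          simp only [Complex.normSq_neg, Complex.normSq_div, Complex.normSq_conj,
            Complex.normSq_ofReal]
          rw [Complex.normSq_eq_norm_sq, pow_two]
          rw [div_self (mul_ne_zero hzn.ne' hzn.ne')]
        rw [this]
        simp
      set x : n → ℂ := Pi.single i 1 + Pi.single j w with hxdef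
      have hq := re_qf_nonneg hM x
      have expand : star x ⬝ᵥ M *ᵥ x
          = conj (1:ℂ) * M i i * 1 + conj (1:ℂ) * M i j * w
            + conj w * M j i * 1 + conj w * M j j * w := by
        rw [hxdef, star_add, Matrix.mulVec_add, add_dotProduct, dotProduct_add,
          dotProduct_add, dot_single_single, dot_single_single, dot_single_single,
          dot_single_single]
        ring
      rw [expand] at hq
      have hsimp : conj (1:ℂ) * M i i * 1 + conj (1:ℂ) * M i j * w
            + conj w * M j i * 1 + conj w * M j j * w
          = M i i + M j j - 2 * ((‖z‖:ℝ):ℂ) := by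
        rw [hji, ← hz]
        simp only [_root_.map_one, one_mul, mul_one]
        calc M i i + z * w + conj w * conj z + conj w * M j j * w
            = M i i + (z * w) + (conj w * conj z) + (conj w * w) * M j j := by ring
          _ = M i i + M j j - 2 * ((‖z‖:ℝ):ℂ) := by rw [hzw, hwz, hww]; ring
      rw [hsimp] at hq
      have hre : (0:ℝ) ≤ (M i i).re + (M j j).re - 2 * ‖z‖ := by
        have h2 : (M i i + M j j - 2 * ((‖z‖:ℝ):ℂ)).re
            = (M i i).re + (M j j).re - 2 * ‖z‖ := by
          simp [Complex.sub_re, Complex.add_re, Complex.mul_re]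
        rw [h2] at hq
        exact hq
      have hsum : (M i i).re + (M j j).re ≤ M.trace.re := by
        rw [tr_eq]
        have h2 : ∑ k ∈ ({i, j} : Finset n), (M k k).re ≤ ∑ k, (M k k).re :=
          Finset.sum_le_sum_of_subset_of_nonneg (Finset.subset_univ _)
            (fun k _ _ => diag_nonneg k)
        rwa [Finset.sum_pair hij] at h2
      linarith

section Topo

attribute [local instance] Matrix.normedAddCommGroup Matrix.normedSpace

lemma continuous_entry (i j : n) : Continuous fun M : Matrix n n ℂ => M i j :=
  (continuous_apply j).comp (continuous_apply i)

lemma continuous_qf_M (x : n → ℂ) :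
    Continuous fun M : Matrix n n ℂ => star x ⬝ᵥ M *ᵥ x := by
  have h : (fun M : Matrix n n ℂ => star x ⬝ᵥ M *ᵥ x)
      = fun M => ∑ i, ∑ j, conj (x i) * M i j * x j := funext fun M => qf_expand M x
  rw [h]
  refine continuous_finset_sum _ fun i _ => continuous_finset_sum _ fun j _ => ?_
  exact (continuous_const.mul (continuous_entry i j)).mul continuous_const

lemma continuous_qf_x (M : Matrix n n ℂ) :
    Continuous fun x : n → ℂ => star x ⬝ᵥ M *ᵥ x := by
  have h : (fun x : n → ℂ => star x ⬝ᵥ M *ᵥ x)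
      = fun x => ∑ i, ∑ j, conj (x i) * M i j * x j := funext fun x => qf_expand M x
  rw [h]
  refine continuous_finset_sum _ fun i _ => continuous_finset_sum _ fun j _ => ?_
  exact ((Complex.continuous_conj.comp (continuous_apply i)).mul continuous_const).mul
    (continuous_apply j)

lemma continuous_trace_re : Continuous fun M : Matrix n n ℂ => M.trace.re := by
  have h : (fun M : Matrix n n ℂ => M.trace.re) = fun M => (∑ i, M i i).re := rfl
  rw [h]
  exact Complex.continuous_re.comp (continuous_finset_sum _ fun i _ => continuous_entry i i)

lemma isClosed_psd : IsClosed {M : Matrix n n ℂ | M.PosSemidef} := by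
  have h : {M : Matrix n n ℂ | M.PosSemidef}
      = {M : Matrix n n ℂ | Mᴴ = M} ∩
        ⋂ x : n → ℂ, ({M : Matrix n n ℂ | 0 ≤ (star x ⬝ᵥ M *ᵥ x).re}
          ∩ {M : Matrix n n ℂ | (star x ⬝ᵥ M *ᵥ x).im = 0}) := by
    ext M
    constructor
    · intro hM
      refine ⟨hM.1, Set.mem_iInter.mpr fun x => ⟨re_qf_nonneg hM x, qf_im_zero hM.1 x⟩⟩
    · rintro ⟨h1, h2⟩
      refine Matrix.PosSemidef.of_dotProduct_mulVec_nonneg h1 fun x => ?_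
      obtain ⟨ha, hb⟩ := Set.mem_iInter.mp h2 x
      rw [Complex.le_def]
      exact ⟨by simpa using ha, by simpa using hb.symm⟩
  rw [h]
  refine IsClosed.inter ?_ (isClosed_iInter fun x => IsClosed.inter ?_ ?_)
  · exact isClosed_eq (continuous_id.matrix_conjTranspose) continuous_id
  · exact isClosed_le continuous_const (Complex.continuous_re.comp (continuous_qf_M x))
  · exact isClosed_eq (Complex.continuous_im.comp (continuous_qf_M x)) continuous_const

lemma isOpen_dpos [Nonempty n] :
    IsOpen {M : Matrix n n ℂ | ∀ x : n → ℂ, x ≠ 0 → 0 < (star x ⬝ᵥ M *ᵥ x).re} := by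
  refine Metric.isOpen_iff.mpr ?_
  intro M₀ hM₀
  set S := Metric.sphere (0 : n → ℂ) 1 with hS
  have hScomp : IsCompact S := isCompact_sphere 0 1
  have hSne : S.Nonempty := by
    refine ⟨(fun _ => 1 : n → ℂ), ?_⟩
    simp [hS, Metric.mem_sphere, dist_zero_right]
  have hcont : ContinuousOn (fun x : n → ℂ => (star x ⬝ᵥ M₀ *ᵥ x).re) S :=
    (Complex.continuous_re.comp (continuous_qf_x M₀)).continuousOn
  obtain ⟨x₀, hx₀S, hmin⟩ := hScomp.exists_isMinOn hSne hcont
  have hx₀norm : ‖x₀‖ = 1 := by simpa [hS, dist_zero_right] using hx₀S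
  have hx₀ne : x₀ ≠ 0 := by
    intro h0
    rw [h0] at hx₀norm
    simp at hx₀norm
  set ε₀ := (star x₀ ⬝ᵥ M₀ *ᵥ x₀).re with hε₀def
  have hε₀ : 0 < ε₀ := hM₀ x₀ hx₀ne
  set c := ((Fintype.card n : ℝ))^3 with hc
  have hcpos : (0:ℝ) < c + 1 := by positivity
  refine ⟨ε₀ / (c + 1), by positivity, ?_⟩
  intro M hM
  have hdist : ‖M - M₀‖ < ε₀ / (c + 1) := by
    rw [← dist_eq_norm]
    exact hM
  intro x hx
  have hxn : (0:ℝ) < ‖x‖ := norm_pos_iff.mpr hx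
  set u : n → ℂ := ‖x‖⁻¹ • x with hu
  have hu_norm : ‖u‖ = 1 := by
    rw [hu, norm_smul]
    simp [abs_of_pos (inv_pos.mpr hxn)]
    exact inv_mul_cancel₀ hxn.ne'
  have huS : u ∈ S := by simp [hS, dist_zero_right, hu_norm]
  have hentry : ∀ i, Complex.normSq (u i) ≤ 1 := by
    intro i
    have h1 : ‖u i‖ ≤ 1 := by
      have := norm_le_pi_norm u i
      rwa [hu_norm] at this
    have : Complex.normSq (u i) = ‖u i‖^2 := by
      rw [Complex.normSq_eq_norm_sq]
    rw [this]
    nlinarith [norm_nonneg (u i)]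
  have hdiff : |(star u ⬝ᵥ (M - M₀) *ᵥ u).re| ≤ c * ‖M - M₀‖ := by
    have h1 := abs_qf_le (M - M₀) u
    have h2 : ∑ i, ∑ j, ‖(M - M₀) i j‖ ≤ (Fintype.card n : ℝ)^2 * ‖M - M₀‖ := by
      calc ∑ i, ∑ j, ‖(M - M₀) i j‖ ≤ ∑ _i : n, ∑ _j : n, ‖M - M₀‖ :=
            Finset.sum_le_sum fun i _ => Finset.sum_le_sum fun j _ =>
              Matrix.norm_entry_le_entrywise_sup_norm _
        _ = (Fintype.card n : ℝ)^2 * ‖M - M₀‖ := by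
            simp [Finset.sum_const, Finset.card_univ]
            ring
    have h3 : ∑ i, Complex.normSq (u i) ≤ (Fintype.card n : ℝ) := by
      calc ∑ i, Complex.normSq (u i) ≤ ∑ _i : n, (1:ℝ) :=
            Finset.sum_le_sum fun i _ => hentry i
        _ = (Fintype.card n : ℝ) := by simp
    have h4 : (0:ℝ) ≤ ∑ i, Complex.normSq (u i) :=
      Finset.sum_nonneg fun i _ => Complex.normSq_nonneg _
    have h5 : (0:ℝ) ≤ ∑ i, ∑ j, ‖(M - M₀) i j‖ :=
      Finset.sum_nonneg fun i _ => Finset.sum_nonneg fun j _ => norm_nonneg _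
    have h6 : (∑ i, ∑ j, ‖(M - M₀) i j‖) * ∑ i, Complex.normSq (u i)
        ≤ ((Fintype.card n : ℝ)^2 * ‖M - M₀‖) * (Fintype.card n : ℝ) := by
      apply mul_le_mul h2 h3 h4
      positivity
    calc |(star u ⬝ᵥ (M - M₀) *ᵥ u).re|
        ≤ (∑ i, ∑ j, ‖(M - M₀) i j‖) * ∑ i, Complex.normSq (u i) := h1
      _ ≤ ((Fintype.card n : ℝ)^2 * ‖M - M₀‖) * (Fintype.card n : ℝ) := h6
      _ = c * ‖M - M₀‖ := by rw [hc]; ring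
  have hM₀u : ε₀ ≤ (star u ⬝ᵥ M₀ *ᵥ u).re := hmin huS
  have key : 0 < (star u ⬝ᵥ M *ᵥ u).re := by
    have split : star u ⬝ᵥ M *ᵥ u = star u ⬝ᵥ M₀ *ᵥ u + star u ⬝ᵥ (M - M₀) *ᵥ u := by
      rw [qf_sub]
      ring
    rw [split, Complex.add_re]
    set r := ε₀ / (c + 1) with hr
    have hrc : r * (c + 1) = ε₀ := div_mul_cancel₀ _ hcpos.ne'
    have hcnn : (0:ℝ) ≤ c := by positivity
    have h7 : c * ‖M - M₀‖ ≤ c * r := mul_le_mul_of_nonneg_left hdist.le hcnn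
    have h8 := (abs_le.mp hdiff).1
    have hrpos : 0 < r := by positivity
    nlinarith
  have hscale := qf_vec_smul (‖x‖⁻¹) M x
  rw [← hu] at hscale
  have hre : (star u ⬝ᵥ M *ᵥ u).re = (‖x‖⁻¹)^2 * (star x ⬝ᵥ M *ᵥ x).re := by
    rw [hscale, Complex.re_ofReal_mul]
  rw [hre] at key
  nlinarith [key, sq_nonneg (‖x‖⁻¹)]

lemma exists_matrix_repr (g : Matrix n n ℂ →L[ℝ] ℝ) :
    ∃ M : Matrix n n ℂ, ∀ y : Matrix n n ℂ, ((M * y).trace).re = g y := by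
  refine ⟨Matrix.of fun i j =>
    ((g (Matrix.single j i 1) : ℝ) : ℂ)
      - Complex.I * ((g (Matrix.single j i Complex.I) : ℝ) : ℂ), fun y => ?_⟩
  have hdec : y = ∑ j : n, ∑ i : n, ((y j i).re • Matrix.single j i (1:ℂ)
      + (y j i).im • Matrix.single j i Complex.I) := by
    conv_lhs => rw [Matrix.matrix_eq_sum_single y]
    refine Finset.sum_congr rfl fun j _ => Finset.sum_congr rfl fun i _ => ?_
    rw [Matrix.smul_single, Matrix.smul_single, ← Matrix.single_add]
    congr 1
    simp [Complex.real_smul]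
  have hg : g y = ∑ j : n, ∑ i : n,
      ((y j i).re * g (Matrix.single j i (1:ℂ))
        + (y j i).im * g (Matrix.single j i Complex.I)) := by
    conv_lhs => rw [hdec]
    rw [map_sum]
    refine Finset.sum_congr rfl fun j _ => ?_
    rw [map_sum]
    refine Finset.sum_congr rfl fun i _ => ?_
    rw [map_add, ContinuousLinearMap.map_smul, ContinuousLinearMap.map_smul]
    simp [smul_eq_mul]
  have htr : ((Matrix.of fun i j =>
      ((g (Matrix.single j i 1) : ℝ) : ℂ)
        - Complex.I * ((g (Matrix.single j i Complex.I) : ℝ) : ℂ) : Matrix n n ℂ) * y).trace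
      = ∑ i : n, ∑ j : n,
        (((g (Matrix.single j i 1) : ℝ) : ℂ)
          - Complex.I * ((g (Matrix.single j i Complex.I) : ℝ) : ℂ)) * y j i := by
    rw [Matrix.trace]
    simp only [Matrix.diag, Matrix.mul_apply, Matrix.of_apply]
  rw [htr, hg, Complex.re_sum, Finset.sum_comm]
  refine Finset.sum_congr rfl fun j _ => ?_
  rw [Complex.re_sum]
  refine Finset.sum_congr rfl fun i _ => ?_
  have key : ∀ (a b : ℝ) (z : ℂ), (((a:ℂ) - Complex.I * (b:ℂ)) * z).re = z.re * a + z.im * b := by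
    intro a b z
    simp [sub_mul, Complex.sub_re, Complex.mul_re, Complex.mul_im,
      Complex.I_re, Complex.I_im, Complex.ofReal_re, Complex.ofReal_im]
    ring
  exact key _ _ _

end Topo

section MorePSD

set_option linter.unusedSectionVars false

lemma psd_real_smul {M : Matrix n n ℂ} {c : ℝ} (hc : 0 ≤ c) (hM : M.PosSemidef) :
    (c • M).PosSemidef := by
  refine psd_of_herm ?_ fun x => ?_
  · rw [Matrix.IsHermitian, Matrix.conjTranspose_smul, hM.1.eq]
    simp
  · rw [qf_real_smul, Complex.re_ofReal_mul]
    exact mul_nonneg hc (re_qf_nonneg hM x)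

lemma psd_add' {M N : Matrix n n ℂ} (hM : M.PosSemidef) (hN : N.PosSemidef) :
    (M + N).PosSemidef := hM.add hN

lemma smul_one_psd {c : ℝ} (hc : 0 ≤ c) : ((c • (1 : Matrix n n ℂ))).PosSemidef := by
  refine psd_of_herm ?_ fun x => ?_
  · rw [Matrix.IsHermitian, Matrix.conjTranspose_smul, Matrix.conjTranspose_one]
    simp
  · rw [qf_real_smul, qf_one, Complex.re_ofReal_mul]
    simp only [Complex.ofReal_re]
    exact mul_nonneg hc (Finset.sum_nonneg fun i _ => Complex.normSq_nonneg _)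

lemma herm_part_isHermitian (M : Matrix n n ℂ) :
    (((1/2 : ℝ)) • (M + Mᴴ)).IsHermitian := by
  rw [Matrix.IsHermitian, Matrix.conjTranspose_smul, Matrix.conjTranspose_add,
    Matrix.conjTranspose_conjTranspose]
  simp [add_comm]

lemma herm_part_qf_re (M : Matrix n n ℂ) (x : n → ℂ) :
    (star x ⬝ᵥ (((1/2 : ℝ)) • (M + Mᴴ)) *ᵥ x).re = (star x ⬝ᵥ M *ᵥ x).re := by
  rw [qf_real_smul, qf_add, qf_conjTranspose, Complex.add_conj, Complex.re_ofReal_mul]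
  simp

lemma herm_part_psd {M : Matrix n n ℂ} (h : ∀ x, 0 ≤ (star x ⬝ᵥ M *ᵥ x).re) :
    (((1/2 : ℝ)) • (M + Mᴴ)).PosSemidef :=
  psd_of_herm (herm_part_isHermitian M) fun x => by rw [herm_part_qf_re]; exact h x

lemma trace_herm_part_mul (M y : Matrix n n ℂ) (hy : y.IsHermitian) :
    (((((1/2 : ℝ)) • (M + Mᴴ)) * y).trace).re = ((M * y).trace).re := by
  have h1 : (((1/2 : ℝ)) • (M + Mᴴ)) * y = ((1/2 : ℝ)) • (M * y + Mᴴ * y) := by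
    rw [Matrix.smul_mul, Matrix.add_mul]
  rw [h1, Matrix.trace_smul, Matrix.trace_add]
  have h2 : (Mᴴ * y).trace = star ((M * y).trace) := by
    calc (Mᴴ * y).trace = (Mᴴ * yᴴ).trace := by rw [hy.eq]
      _ = ((y * M)ᴴ).trace := by rw [Matrix.conjTranspose_mul]
      _ = star ((y * M).trace) := Matrix.trace_conjTranspose _
      _ = star ((M * y).trace) := by rw [Matrix.trace_mul_comm]
  rw [h2]
  have h3 : ((M * y).trace + star ((M * y).trace)) = ((2 * ((M * y).trace).re : ℝ) : ℂ) :=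
    Complex.add_conj _
  rw [h3, Complex.real_smul, Complex.re_ofReal_mul]
  push_cast
  simp

lemma psd_combo {M N : Matrix n n ℂ} {a b : ℝ} (ha : 0 ≤ a) (hb : 0 ≤ b)
    (hM : M.PosSemidef) (hN : N.PosSemidef) : (a • M + b • N).PosSemidef :=
  (psd_real_smul ha hM).add (psd_real_smul hb hN)

end MorePSD

section AB
variable {A B : Type*} [Fintype A] [Fintype B] [DecidableEq A] [DecidableEq B]

lemma entry_herm {M : Matrix n n ℂ} (hM : M.IsHermitian) (i j : n) :
    star (M i j) = M j i := by
  have := congrFun (congrFun hM.eq j) i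
  rw [Matrix.conjTranspose_apply] at this
  exact this

lemma trace_one_kron_mul (σ : Matrix B B ℂ) (E : Matrix (A × B) (A × B) ℂ) :
    (((1 : Matrix A A ℂ) ⊗ₖ σ) * E).trace = (σ * ptraceA E).trace := by
  have lhs : (((1 : Matrix A A ℂ) ⊗ₖ σ) * E).trace
      = ∑ a : A, ∑ b : B, ∑ a' : A, ∑ b' : B,
        ((1 : Matrix A A ℂ) a a' * σ b b') * E (a', b') (a, b) := by
    rw [Matrix.trace]
    simp only [Matrix.diag, Matrix.mul_apply, Matrix.kroneckerMap_apply]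
    rw [Fintype.sum_prod_type]
    refine Finset.sum_congr rfl fun a _ => Finset.sum_congr rfl fun b _ => ?_
    rw [Fintype.sum_prod_type]
  have rhs : (σ * ptraceA E).trace
      = ∑ b : B, ∑ b' : B, ∑ a : A, σ b b' * E (a, b') (a, b) := by
    rw [Matrix.trace]
    simp only [Matrix.diag, Matrix.mul_apply, ptraceA, Matrix.of_apply]
    refine Finset.sum_congr rfl fun b _ => Finset.sum_congr rfl fun b' _ => ?_
    rw [Finset.mul_sum]
  rw [lhs, rhs]
  have collapse : ∀ (a : A) (b : B),
      (∑ a' : A, ∑ b' : B, ((1 : Matrix A A ℂ) a a' * σ b b') * E (a', b') (a, b))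
      = ∑ b' : B, σ b b' * E (a, b') (a, b) := by
    intro a b
    rw [Finset.sum_eq_single a]
    · simp [Matrix.one_apply]
    · intro a' _ ha'
      simp [Matrix.one_apply, Ne.symm ha']
    · simp
  calc ∑ a : A, ∑ b : B, ∑ a' : A, ∑ b' : B,
        ((1 : Matrix A A ℂ) a a' * σ b b') * E (a', b') (a, b)
      = ∑ a : A, ∑ b : B, ∑ b' : B, σ b b' * E (a, b') (a, b) := by
        refine Finset.sum_congr rfl fun a _ => Finset.sum_congr rfl fun b _ => collapse a b
    _ = ∑ b : B, ∑ b' : B, ∑ a : A, σ b b' * E (a, b') (a, b) := by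
        rw [Finset.sum_comm]
        refine Finset.sum_congr rfl fun b _ => Finset.sum_comm

lemma ptraceA_isHermitian {E : Matrix (A × B) (A × B) ℂ} (hE : E.IsHermitian) :
    (ptraceA E).IsHermitian := by
  ext i j
  show star (ptraceA E j i) = ptraceA E i j
  have : ptraceA E j i = ∑ a : A, E (a, j) (a, i) := rfl
  rw [this]
  have : ptraceA E i j = ∑ a : A, E (a, i) (a, j) := rfl
  rw [this, star_sum]
  exact Finset.sum_congr rfl fun a _ => entry_herm hE _ _

lemma one_kron_isHermitian {σ : Matrix B B ℂ} (hσ : σ.IsHermitian) :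
    ((1 : Matrix A A ℂ) ⊗ₖ σ).IsHermitian := by
  ext p q
  show star (((1 : Matrix A A ℂ) ⊗ₖ σ) q p) = ((1 : Matrix A A ℂ) ⊗ₖ σ) p q
  simp only [Matrix.kroneckerMap_apply, star_mul']
  by_cases h : p.1 = q.1
  · rw [h]
    simp [Matrix.one_apply, entry_herm hσ]
  · simp [Matrix.one_apply, h, Ne.symm h]

lemma one_kron_add (σ τ : Matrix B B ℂ) :
    (1 : Matrix A A ℂ) ⊗ₖ (σ + τ) = (1 : Matrix A A ℂ) ⊗ₖ σ + (1 : Matrix A A ℂ) ⊗ₖ τ := by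
  ext p q
  simp [Matrix.kroneckerMap_apply, Matrix.add_apply, mul_add]

lemma one_kron_smul (c : ℝ) (σ : Matrix B B ℂ) :
    (1 : Matrix A A ℂ) ⊗ₖ (c • σ) = c • ((1 : Matrix A A ℂ) ⊗ₖ σ) := by
  ext p q
  simp only [Matrix.kroneckerMap_apply, Matrix.smul_apply, Complex.real_smul]
  ring

lemma weak_duality {ρ E : Matrix (A × B) (A × B) ℂ} {σ : Matrix B B ℂ}
    (hE : E.PosSemidef) (hE2 : ((1 : Matrix B B ℂ) - ptraceA E).PosSemidef)
    (hσ : σ.PosSemidef) (hfeas : ((1 : Matrix A A ℂ) ⊗ₖ σ - ρ).PosSemidef) :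
    ((ρ * E).trace).re ≤ σ.trace.re := by
  have h1 : 0 ≤ ((((1 : Matrix A A ℂ) ⊗ₖ σ - ρ) * E).trace).re :=
    trace_mul_psd_re_nonneg hfeas hE
  have h2 : (((1 : Matrix A A ℂ) ⊗ₖ σ - ρ) * E).trace
      = (((1 : Matrix A A ℂ) ⊗ₖ σ) * E).trace - ((ρ * E).trace) := by
    rw [Matrix.sub_mul, Matrix.trace_sub]
  have h3 : 0 ≤ ((σ * ((1 : Matrix B B ℂ) - ptraceA E)).trace).re :=
    trace_mul_psd_re_nonneg hσ hE2
  have h4 : (σ * ((1 : Matrix B B ℂ) - ptraceA E)).trace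
      = σ.trace - (σ * ptraceA E).trace := by
    rw [Matrix.mul_sub, Matrix.mul_one, Matrix.trace_sub]
  have h5 := trace_one_kron_mul (A := A) σ E
  rw [h2] at h1
  rw [h4] at h3
  rw [h5] at h1
  rw [Complex.sub_re] at h1 h3
  linarith

end AB

section Main

attribute [local instance] Matrix.normedAddCommGroup Matrix.normedSpace

set_option linter.unusedSectionVars false

variable {A B : Type*} [Fintype A] [Fintype B] [DecidableEq A] [DecidableEq B]
  [Nonempty A] [Nonempty B]

lemma continuous_qf_kron (x : (A × B) → ℂ) (ρ : Matrix (A × B) (A × B) ℂ) :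
    Continuous fun σ : Matrix B B ℂ =>
      (star x ⬝ᵥ ((1 : Matrix A A ℂ) ⊗ₖ σ - ρ) *ᵥ x) := by
  have h : (fun σ : Matrix B B ℂ => star x ⬝ᵥ ((1 : Matrix A A ℂ) ⊗ₖ σ - ρ) *ᵥ x)
      = fun σ => ∑ p : A × B, ∑ q : A × B,
          conj (x p) * (((1 : Matrix A A ℂ) p.1 q.1) * σ p.2 q.2 - ρ p q) * x q := by
    funext σ
    rw [qf_expand]
    refine Finset.sum_congr rfl fun p _ => Finset.sum_congr rfl fun q _ => ?_
    simp [Matrix.sub_apply, Matrix.kroneckerMap_apply]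
  rw [h]
  refine continuous_finset_sum _ fun p _ => continuous_finset_sum _ fun q _ => ?_
  exact (continuous_const.mul ((continuous_const.mul
    (continuous_entry p.2 q.2)).sub continuous_const)).mul continuous_const

lemma primal_attained (ρ : Matrix (A × B) (A × B) ℂ) (hρ : ρ.PosSemidef) :
    ∃ v : ℝ, IsLeast {x : ℝ | ∃ σ : Matrix B B ℂ, σ.PosSemidef ∧
      ((1 : Matrix A A ℂ) ⊗ₖ σ - ρ).PosSemidef ∧ x = σ.trace.re} v := by
  obtain ⟨c, hc0, hcPD⟩ := exists_slater hρ
  set σ₀ : Matrix B B ℂ := c • 1 with hσ₀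
  have hkron : (1 : Matrix A A ℂ) ⊗ₖ σ₀ = c • (1 : Matrix (A × B) (A × B) ℂ) := by
    rw [hσ₀, one_kron_smul, Matrix.one_kronecker_one]
  have hσ₀psd : σ₀.PosSemidef := smul_one_psd hc0
  have hfeas₀ : ((1 : Matrix A A ℂ) ⊗ₖ σ₀ - ρ).PosSemidef := by
    rw [hkron]; exact hcPD.posSemidef
  set t₀ := σ₀.trace.re with ht₀
  have ht₀0 : 0 ≤ t₀ := trace_re_nonneg hσ₀psd
  set F : Set (Matrix B B ℂ) :=
    {σ | σ.PosSemidef ∧ ((1 : Matrix A A ℂ) ⊗ₖ σ - ρ).PosSemidef} with hF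
  set K : Set (Matrix B B ℂ) := F ∩ {σ | σ.trace.re ≤ t₀} with hK
  have hσ₀K : σ₀ ∈ K := ⟨⟨hσ₀psd, hfeas₀⟩, by rw [Set.mem_setOf_eq, ht₀]⟩
  have hFclosed : IsClosed F := by
    have hFalt : F = {σ : Matrix B B ℂ | σ.PosSemidef} ∩
        ⋂ x : (A × B) → ℂ,
          {σ : Matrix B B ℂ | 0 ≤ (star x ⬝ᵥ ((1 : Matrix A A ℂ) ⊗ₖ σ - ρ) *ᵥ x).re} := by
      ext σ
      constructor
      · rintro ⟨h1, h2⟩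
        exact ⟨h1, Set.mem_iInter.mpr fun x => re_qf_nonneg h2 x⟩
      · rintro ⟨h1, h2⟩
        exact ⟨h1, psd_of_herm ((one_kron_isHermitian h1.1).sub hρ.1)
          fun x => Set.mem_iInter.mp h2 x⟩
    rw [hFalt]
    refine IsClosed.inter isClosed_psd (isClosed_iInter fun x => ?_)
    exact isClosed_le continuous_const (Complex.continuous_re.comp (continuous_qf_kron x ρ))
  have hKclosed : IsClosed K :=
    hFclosed.inter (isClosed_le continuous_trace_re continuous_const)
  have hKbdd : Bornology.IsBounded K := by
    refine (Metric.isBounded_closedBall (x := (0 : Matrix B B ℂ)) (r := t₀)).subset ?_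
    intro σ hσ
    rw [Metric.mem_closedBall, dist_zero_right]
    refine (pi_norm_le_iff_of_nonneg ht₀0).mpr fun i => ?_
    refine (pi_norm_le_iff_of_nonneg ht₀0).mpr fun j => ?_
    exact le_trans (entry_norm_le_trace hσ.1.1 i j) hσ.2
  have hKcomp : IsCompact K := Metric.isCompact_of_isClosed_isBounded hKclosed hKbdd
  obtain ⟨σs, hσsK, hmin⟩ := hKcomp.exists_isMinOn ⟨σ₀, hσ₀K⟩
    continuous_trace_re.continuousOn
  refine ⟨σs.trace.re, ⟨σs, hσsK.1.1, hσsK.1.2, rfl⟩, ?_⟩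
  rintro x ⟨σ, hσpsd, hσfeas, rfl⟩
  by_cases hx : σ.trace.re ≤ t₀
  · exact (isMinOn_iff.mp hmin) σ ⟨⟨hσpsd, hσfeas⟩, hx⟩
  · have h1 : σs.trace.re ≤ t₀ := (isMinOn_iff.mp hmin) σ₀ hσ₀K
    linarith

lemma combo_pos {θ μ a b : ℝ} (hθ : 0 ≤ θ) (hμ : 0 ≤ μ) (hθμ : θ + μ = 1)
    (ha : 0 < a) (hb : 0 < b) : 0 < θ * a + μ * b := by
  rcases hθ.eq_or_lt with h | h
  · have hμ1 : μ = 1 := by linarith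
    rw [← h, hμ1]
    linarith
  · have h1 : 0 < θ * a := mul_pos h ha
    have h2 : 0 ≤ μ * b := mul_nonneg hμ hb.le
    linarith

lemma combo_lt {θ μ a b c d : ℝ} (hθ : 0 ≤ θ) (hμ : 0 ≤ μ) (hθμ : θ + μ = 1)
    (h1 : a < c) (h2 : b < d) : θ * a + μ * b < θ * c + μ * d := by
  rcases hθ.eq_or_lt with h | h
  · have hμ1 : μ = 1 := by linarith
    rw [← h, hμ1]
    linarith
  · have ha : θ * a < θ * c := by exact mul_lt_mul_of_pos_left h1 h
    have hb : μ * b ≤ μ * d := mul_le_mul_of_nonneg_left h2.le hμ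
    linarith

set_option maxHeartbeats 2000000 in
lemma dual_attained (ρ : Matrix (A × B) (A × B) ℂ) (hρ : ρ.PosSemidef) (v : ℝ)
    (hleast : IsLeast {x : ℝ | ∃ σ : Matrix B B ℂ, σ.PosSemidef ∧
      ((1 : Matrix A A ℂ) ⊗ₖ σ - ρ).PosSemidef ∧ x = σ.trace.re} v) :
    ∃ E : Matrix (A × B) (A × B) ℂ, E.PosSemidef ∧
      ((1 : Matrix B B ℂ) - ptraceA E).PosSemidef ∧ ((ρ * E).trace).re = v := by
  set U : Set ((Matrix (A × B) (A × B) ℂ) × ℝ) := {u | ∃ σ : Matrix B B ℂ, σ.PosSemidef ∧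
    (∀ x : (A × B) → ℂ, x ≠ 0 →
      0 < (star x ⬝ᵥ ((1 : Matrix A A ℂ) ⊗ₖ σ - ρ - u.1) *ᵥ x).re)
    ∧ σ.trace.re < u.2} with hU
  have hUopen : IsOpen U := by
    rw [isOpen_iff_forall_mem_open]
    rintro ⟨y, t⟩ ⟨σ, hσ, hdpos, htr⟩
    refine ⟨((fun u : (Matrix (A × B) (A × B) ℂ) × ℝ => (1 : Matrix A A ℂ) ⊗ₖ σ - ρ - u.1) ⁻¹'
        {M : Matrix (A × B) (A × B) ℂ | ∀ x : (A × B) → ℂ, x ≠ 0 →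
          0 < (star x ⬝ᵥ M *ᵥ x).re})
        ∩ ((fun u : (Matrix (A × B) (A × B) ℂ) × ℝ => u.2) ⁻¹' Set.Ioi σ.trace.re),
        ?_, ?_, ?_⟩
    · rintro ⟨y', t'⟩ ⟨h1, h2⟩
      exact ⟨σ, hσ, h1, h2⟩
    · refine IsOpen.inter ?_ ?_
      · exact IsOpen.preimage (continuous_const.sub continuous_fst) isOpen_dpos
      · exact IsOpen.preimage continuous_snd isOpen_Ioi
    · exact ⟨hdpos, htr⟩
  have hUconv : Convex ℝ U := by
    rintro ⟨y₁, t₁⟩ ⟨σ₁, hσ₁, hd₁, ht₁⟩ ⟨y₂, t₂⟩ ⟨σ₂, hσ₂, hd₂, ht₂⟩ θ μ hθ hμ hθμ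
    refine ⟨θ • σ₁ + μ • σ₂, psd_combo hθ hμ hσ₁ hσ₂, ?_, ?_⟩
    · intro x hx
      have hid : (1 : Matrix A A ℂ) ⊗ₖ (θ • σ₁ + μ • σ₂) - ρ
            - (θ • (y₁, t₁) + μ • (y₂, t₂) : (Matrix (A × B) (A × B) ℂ) × ℝ).1
          = θ • ((1 : Matrix A A ℂ) ⊗ₖ σ₁ - ρ - y₁)
            + μ • ((1 : Matrix A A ℂ) ⊗ₖ σ₂ - ρ - y₂) := by
        have hfst : (θ • (y₁, t₁) + μ • (y₂, t₂) : (Matrix (A × B) (A × B) ℂ) × ℝ).1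
            = θ • y₁ + μ • y₂ := rfl
        rw [hfst, one_kron_add, one_kron_smul, one_kron_smul]
        match_scalars <;> linarith
      rw [hid, qf_add, qf_real_smul, qf_real_smul, Complex.add_re,
        Complex.re_ofReal_mul, Complex.re_ofReal_mul]
      exact combo_pos hθ hμ hθμ (hd₁ x hx) (hd₂ x hx)
    · have hsnd : (θ • (y₁, t₁) + μ • (y₂, t₂) : (Matrix (A × B) (A × B) ℂ) × ℝ).2
          = θ * t₁ + μ * t₂ := rfl
      rw [hsnd]
      have htr : ((θ • σ₁ + μ • σ₂ : Matrix B B ℂ).trace).re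
          = θ * σ₁.trace.re + μ * σ₂.trace.re := by
        rw [Matrix.trace_add, Matrix.trace_smul, Matrix.trace_smul, Complex.add_re]
        rw [Complex.real_smul, Complex.real_smul, Complex.re_ofReal_mul,
          Complex.re_ofReal_mul]
      rw [htr]
      exact combo_lt hθ hμ hθμ ht₁ ht₂
  have hnot : ((0 : Matrix (A × B) (A × B) ℂ), v) ∉ U := by
    rintro ⟨σ, hσ, hdpos, hlt⟩
    have hherm : ((1 : Matrix A A ℂ) ⊗ₖ σ - ρ).IsHermitian :=
      (one_kron_isHermitian hσ.1).sub hρ.1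
    have hfeas : ((1 : Matrix A A ℂ) ⊗ₖ σ - ρ).PosSemidef := by
      refine (pd_of_herm hherm fun x hx => ?_).posSemidef
      have := hdpos x hx
      rwa [sub_zero] at this
    have : v ≤ σ.trace.re := hleast.2 ⟨σ, hσ, hfeas, rfl⟩
    simp only [hU] at hlt
    linarith [hlt]
  obtain ⟨f, hf⟩ := geometric_hahn_banach_open_point hUconv hUopen hnot
  set g : Matrix (A × B) (A × B) ℂ →L[ℝ] ℝ :=
    f.comp (ContinuousLinearMap.inl ℝ (Matrix (A × B) (A × B) ℂ) ℝ) with hg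
  set sc : ℝ := f (0, 1) with hsc
  have hsplit : ∀ (y : Matrix (A × B) (A × B) ℂ) (t : ℝ), f (y, t) = g y + t * sc := by
    intro y t
    have h1 : ((y, t) : (Matrix (A × B) (A × B) ℂ) × ℝ)
        = (y, 0) + t • ((0 : Matrix (A × B) (A × B) ℂ), (1 : ℝ)) := by
      rw [Prod.smul_mk, smul_zero, smul_eq_mul, mul_one, Prod.mk_add_mk, add_zero, zero_add]
    rw [h1, map_add, ContinuousLinearMap.map_smul]
    simp [hg, hsc, smul_eq_mul]
  -- Slater point
  obtain ⟨c, hc0, hcPD⟩ := exists_slater hρ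
  set σ₀ : Matrix B B ℂ := c • 1 with hσ₀def
  have hσ₀psd : σ₀.PosSemidef := smul_one_psd hc0
  have hkron : (1 : Matrix A A ℂ) ⊗ₖ σ₀ = c • (1 : Matrix (A × B) (A × B) ℂ) := by
    rw [hσ₀def, one_kron_smul, Matrix.one_kronecker_one]
  have hP₀ : ((1 : Matrix A A ℂ) ⊗ₖ σ₀ - ρ).PosDef := by rw [hkron]; exact hcPD
  set t₀ := σ₀.trace.re with ht₀def
  have hmem0 : ∀ t : ℝ, t₀ < t → ((0 : Matrix (A × B) (A × B) ℂ), t) ∈ U := by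
    intro t ht
    exact ⟨σ₀, hσ₀psd, fun x hx => by
      rw [sub_zero]; exact hP₀.re_dotProduct_pos hx, ht⟩
  have hf0 : ∀ t, t₀ < t → t * sc < v * sc := by
    intro t ht
    have h := hf _ (hmem0 t ht)
    rw [hsplit, hsplit] at h
    simpa [map_zero] using h
  have hsneg : sc < 0 := by
    rcases lt_trichotomy sc 0 with h | h | h
    · exact h
    · exfalso
      have h2 := hf0 (t₀ + 1) (by linarith)
      rw [h] at h2
      simp at h2
    · exfalso
      have ht' : t₀ < max t₀ v + 1 := by
        have := le_max_left t₀ v; linarith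
      have h2 := hf0 _ ht'
      have hv : v < max t₀ v + 1 := by
        have := le_max_right t₀ v; linarith
      nlinarith
  have hsneg' : (0:ℝ) < -sc := by linarith
  -- g is nonnegative on PSD matrices
  have hgpsd : ∀ P : Matrix (A × B) (A × B) ℂ, P.PosSemidef → 0 ≤ g P := by
    intro P hP
    by_contra hneg
    push_neg at hneg
    have hgP : 0 < -(g P) := by linarith
    set r : ℝ := (|v * sc - (t₀ + 1) * sc| + 1) / (-(g P)) with hr
    have hr0 : 0 ≤ r := by positivity
    have hmem : ((-(r • P) : Matrix (A × B) (A × B) ℂ), t₀ + 1) ∈ U := by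
      refine ⟨σ₀, hσ₀psd, fun x hx => ?_, by linarith [ht₀def]⟩
      have hq : (1 : Matrix A A ℂ) ⊗ₖ σ₀ - ρ - (-(r • P))
          = ((1 : Matrix A A ℂ) ⊗ₖ σ₀ - ρ) + r • P := by
        rw [sub_neg_eq_add]
      rw [hq, qf_add, qf_real_smul, Complex.add_re, Complex.re_ofReal_mul]
      have h1 : 0 < (star x ⬝ᵥ ((1 : Matrix A A ℂ) ⊗ₖ σ₀ - ρ) *ᵥ x).re :=
        hP₀.re_dotProduct_pos hx
      have h2 := re_qf_nonneg hP x
      nlinarith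
    have h := hf _ hmem
    rw [hsplit, hsplit] at h
    have hglin : g (-(r • P)) = -(r * g P) := by
      rw [map_neg, ContinuousLinearMap.map_smul, smul_eq_mul]
    rw [hglin, map_zero] at h
    have hcancel : r * (-(g P)) = |v * sc - (t₀ + 1) * sc| + 1 :=
      div_mul_cancel₀ _ hgP.ne'
    have habs := le_abs_self (v * sc - (t₀ + 1) * sc)
    nlinarith
  -- key inequality
  have hstar0 : ∀ σ : Matrix B B ℂ, σ.PosSemidef →
      g ((1 : Matrix A A ℂ) ⊗ₖ σ - ρ) + σ.trace.re * sc ≤ v * sc := by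
    intro σ hσ
    have key : ∀ ε δ : ℝ, 0 < ε → 0 < δ →
        g ((1 : Matrix A A ℂ) ⊗ₖ σ - ρ) - ε * g 1 + (σ.trace.re + δ) * sc < v * sc := by
      intro ε δ hε hδ
      have hmem : (((1 : Matrix A A ℂ) ⊗ₖ σ - ρ - ε • 1 : Matrix (A × B) (A × B) ℂ),
          σ.trace.re + δ) ∈ U := by
        refine ⟨σ, hσ, fun x hx => ?_, by norm_num [hδ]⟩
        have hq : (1 : Matrix A A ℂ) ⊗ₖ σ - ρ
            - ((1 : Matrix A A ℂ) ⊗ₖ σ - ρ - ε • 1)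
            = ε • (1 : Matrix (A × B) (A × B) ℂ) := sub_sub_cancel _ _
        rw [hq, qf_real_smul, qf_one, Complex.re_ofReal_mul]
        have := sum_normSq_pos hx
        have h2 : ((((∑ i, Complex.normSq (x i)) : ℝ) : ℂ)).re
            = ∑ i, Complex.normSq (x i) := Complex.ofReal_re _
        rw [h2]
        positivity
      have h := hf _ hmem
      rw [hsplit, hsplit] at h
      have hglin : g ((1 : Matrix A A ℂ) ⊗ₖ σ - ρ - ε • 1)
          = g ((1 : Matrix A A ℂ) ⊗ₖ σ - ρ) - ε * g 1 := by
        rw [map_sub, ContinuousLinearMap.map_smul, smul_eq_mul]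
      rw [hglin, map_zero] at h
      linarith
    refine le_of_forall_pos_le_add fun η hη => ?_
    set ε := η / (2 * (|g 1| + 1)) with hεdef
    set δ := η / (2 * (|sc| + 1)) with hδdef
    have hε : 0 < ε := by positivity
    have hδ : 0 < δ := by positivity
    have h := key ε δ hε hδ
    have b1 : ε * |g 1| ≤ η / 2 := by
      have h1 : ε * |g 1| ≤ ε * (|g 1| + 1) :=
        mul_le_mul_of_nonneg_left (by linarith) hε.le
      have h2 : ε * (|g 1| + 1) = η / 2 := by
        rw [hεdef]
        field_simp
      linarith
    have b2 : δ * |sc| ≤ η / 2 := by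
      have h1 : δ * |sc| ≤ δ * (|sc| + 1) :=
        mul_le_mul_of_nonneg_left (by linarith) hδ.le
      have h2 : δ * (|sc| + 1) = η / 2 := by
        rw [hδdef]
        field_simp
      linarith
    have e1 : ε * g 1 ≤ ε * |g 1| := mul_le_mul_of_nonneg_left (le_abs_self _) hε.le
    have e2 : -(δ * sc) ≤ δ * |sc| := by
      have : -sc ≤ |sc| := neg_le_abs sc
      calc -(δ * sc) = δ * (-sc) := by ring
        _ ≤ δ * |sc| := mul_le_mul_of_nonneg_left this hδ.le
    nlinarith
  -- value lower bound data
  have hzero_psd : (0 : Matrix B B ℂ).PosSemidef := by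
    refine psd_of_herm ?_ fun x => ?_
    · rw [Matrix.IsHermitian, Matrix.conjTranspose_zero]
    · simp
  have halpha : v * (-sc) ≤ g ρ := by
    have h0 := hstar0 0 hzero_psd
    have h1 : (1 : Matrix A A ℂ) ⊗ₖ (0 : Matrix B B ℂ) - ρ = -ρ := by
      rw [Matrix.kronecker_zero, zero_sub]
    rw [h1, map_neg] at h0
    simp only [Matrix.trace_zero, Complex.zero_re, zero_mul, add_zero] at h0
    linarith
  -- scaled inequality
  have hscaled : ∀ σ : Matrix B B ℂ, σ.PosSemidef →
      g ((1 : Matrix A A ℂ) ⊗ₖ σ) ≤ σ.trace.re * (-sc) := by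
    intro σ hσ
    by_contra hcon
    push_neg at hcon
    set d := g ((1 : Matrix A A ℂ) ⊗ₖ σ) - σ.trace.re * (-sc) with hd
    have hdpos : 0 < d := by rw [hd]; linarith
    have hrineq : ∀ r : ℝ, 0 ≤ r → r * d ≤ v * sc + g ρ := by
      intro r hr
      have h0 := hstar0 (r • σ) (psd_real_smul hr hσ)
      have h1 : (1 : Matrix A A ℂ) ⊗ₖ (r • σ) - ρ
          = r • ((1 : Matrix A A ℂ) ⊗ₖ σ) - ρ := by rw [one_kron_smul]
      have h2 : g ((1 : Matrix A A ℂ) ⊗ₖ (r • σ) - ρ)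
          = r * g ((1 : Matrix A A ℂ) ⊗ₖ σ) - g ρ := by
        rw [h1, map_sub, ContinuousLinearMap.map_smul, smul_eq_mul]
      have h3 : ((r • σ : Matrix B B ℂ).trace).re = r * σ.trace.re := by
        rw [Matrix.trace_smul, Complex.real_smul, Complex.re_ofReal_mul]
      rw [h2, h3] at h0
      have : r * d = r * g ((1 : Matrix A A ℂ) ⊗ₖ σ) + r * σ.trace.re * sc := by
        rw [hd]; ring
      rw [this]
      linarith
    have hbig := hrineq ((|v * sc + g ρ| + 1) / d) (by positivity)
    have hcancel : ((|v * sc + g ρ| + 1) / d) * d = |v * sc + g ρ| + 1 :=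
      div_mul_cancel₀ _ hdpos.ne'
    have habs := le_abs_self (v * sc + g ρ)
    nlinarith
  -- construct E
  obtain ⟨Mr, hMr⟩ := exists_matrix_repr g
  set Eh : Matrix (A × B) (A × B) ℂ := (1/2 : ℝ) • (Mr + Mrᴴ) with hEhdef
  have hEhpsd : Eh.PosSemidef := by
    rw [hEhdef]
    refine herm_part_psd fun x => ?_
    have h1 : 0 ≤ ((Mr * vecMulVec x (star x)).trace).re := by
      rw [hMr]
      exact hgpsd _ (outer_posSemidef x)
    rwa [trace_mul_outer] at h1
  set E : Matrix (A × B) (A × B) ℂ := (-sc)⁻¹ • Eh with hEdef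
  have hEpsd : E.PosSemidef := psd_real_smul (by positivity) hEhpsd
  have hEtr : ∀ y : Matrix (A × B) (A × B) ℂ, y.IsHermitian →
      ((E * y).trace).re = (-sc)⁻¹ * g y := by
    intro y hy
    rw [hEdef, Matrix.smul_mul, Matrix.trace_smul, Complex.real_smul,
      Complex.re_ofReal_mul, hEhdef, Matrix.smul_mul]
    have := trace_herm_part_mul Mr y hy
    rw [Matrix.smul_mul] at this
    rw [this, hMr]
  have houttr : ∀ x : B → ℂ, ((vecMulVec x (star x)).trace)
      = (((∑ i, Complex.normSq (x i)) : ℝ) : ℂ) := by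
    intro x
    rw [Matrix.trace]
    push_cast
    refine Finset.sum_congr rfl fun i _ => ?_
    simp [Matrix.diag, vecMulVec_apply, Complex.mul_conj]
  have hkey : ∀ σ : Matrix B B ℂ, σ.PosSemidef →
      ((σ * ptraceA E).trace).re ≤ σ.trace.re := by
    intro σ hσ
    have h1 : ((E * ((1 : Matrix A A ℂ) ⊗ₖ σ)).trace).re
        = (-sc)⁻¹ * g ((1 : Matrix A A ℂ) ⊗ₖ σ) :=
      hEtr _ (one_kron_isHermitian hσ.1)
    have h2 : (-sc)⁻¹ * g ((1 : Matrix A A ℂ) ⊗ₖ σ)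
        ≤ (-sc)⁻¹ * (σ.trace.re * (-sc)) :=
      mul_le_mul_of_nonneg_left (hscaled σ hσ) (by positivity)
    have h3 : (-sc)⁻¹ * (σ.trace.re * (-sc)) = σ.trace.re := by
      rw [mul_comm ((-sc)⁻¹), mul_assoc, mul_inv_cancel₀ hsneg'.ne', mul_one]
    have h4 : ((σ * ptraceA E).trace) = ((E * ((1 : Matrix A A ℂ) ⊗ₖ σ)).trace) := by
      rw [← trace_one_kron_mul, Matrix.trace_mul_comm]
    rw [h4, h1]
    linarith
  have hfeasE : ((1 : Matrix B B ℂ) - ptraceA E).PosSemidef := by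
    refine psd_of_herm (Matrix.isHermitian_one.sub (ptraceA_isHermitian hEpsd.1))
      fun x => ?_
    rw [qf_sub, Complex.sub_re, qf_one]
    have h1 : (star x ⬝ᵥ ptraceA E *ᵥ x) = ((ptraceA E) * vecMulVec x (star x)).trace :=
      (trace_mul_outer _ x).symm
    have h2 := hkey (vecMulVec x (star x)) (outer_posSemidef x)
    rw [Matrix.trace_mul_comm] at h2
    rw [h1]
    have h3 : ((vecMulVec x (star x)).trace).re = ∑ i, Complex.normSq (x i) := by
      rw [houttr]
      exact Complex.ofReal_re _
    rw [h3] at h2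
    have h4 : ((((∑ i, Complex.normSq (x i)) : ℝ) : ℂ)).re
        = ∑ i, Complex.normSq (x i) := Complex.ofReal_re _
    rw [h4]
    linarith
  have hvalge : v ≤ ((ρ * E).trace).re := by
    have h1 : ((E * ρ).trace).re = (-sc)⁻¹ * g ρ := hEtr ρ hρ.1
    have h2 : v = (-sc)⁻¹ * (v * (-sc)) := by
      rw [mul_comm ((-sc)⁻¹), mul_assoc, mul_inv_cancel₀ hsneg'.ne', mul_one]
    have h3 : (-sc)⁻¹ * (v * (-sc)) ≤ (-sc)⁻¹ * g ρ :=
      mul_le_mul_of_nonneg_left halpha (by positivity)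
    rw [Matrix.trace_mul_comm, h1]
    linarith
  have hvalle : ((ρ * E).trace).re ≤ v := by
    obtain ⟨σs, hσs1, hσs2, hσs3⟩ := hleast.1
    rw [hσs3]
    exact weak_duality hEpsd hfeasE hσs1 hσs2
  exact ⟨E, hEpsd, hfeasE, le_antisymm hvalle hvalge⟩


end Main

end SDPAux

/-- the minimum of `tr σ_B` over PSD `σ_B` with `id_A ⊗ σ_B ≥ ρ_AB`
equals the maximum of `tr(ρ_AB E_AB)` over PSD `E_AB` with `tr_A E_AB ≤ id_B`. -/
theorem stmt1 {A B : Type*} [Fintype A] [Fintype B] [DecidableEq A] [DecidableEq B]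
    [Nonempty A] [Nonempty B]
    (ρ : Matrix (A × B) (A × B) ℂ) (hρ : ρ.PosSemidef) :
    ∃ v : ℝ,
      IsLeast {x : ℝ | ∃ σ : Matrix B B ℂ, σ.PosSemidef ∧
          ((1 : Matrix A A ℂ) ⊗ₖ σ - ρ).PosSemidef ∧ x = σ.trace.re} v ∧
      IsGreatest {x : ℝ | ∃ E : Matrix (A × B) (A × B) ℂ, E.PosSemidef ∧
          ((1 : Matrix B B ℂ) - ptraceA E).PosSemidef ∧ x = (ρ * E).trace.re} v := by
  obtain ⟨v, hleast⟩ := SDPAux.primal_attained ρ hρ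
  obtain ⟨E, hE1, hE2, hE3⟩ := SDPAux.dual_attained ρ hρ v hleast
  refine ⟨v, hleast, ⟨E, hE1, hE2, hE3.symm⟩, ?_⟩
  rintro x ⟨E', h1, h2, rfl⟩
  obtain ⟨σ, hσ1, hσ2, hveq⟩ := hleast.1
  rw [hveq]
  exact SDPAux.weak_duality h1 h2 hσ1 hσ2

end
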